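/- Fix β > 0 and ε > 0. For the distributions q₀ ∝ (e^{2β}, 1, e^{−β}, e^{−β}) and q₁ ∝ (e^{2β}, 1, e^{−β+2βε}, e^{−β−2βε}), we have D(q₁ ‖ q₀) ≤ 8 β² ε² e^{−3β+2βε}. -/

import Mathlib

open Real

/-- KL divergence bound `D(q₁‖q₀) ≤ 8β²ε²e^{−3β+2βε}` for the Gibbs distributions
`q₀ ∝ (e^{2β}, 1, e^{−β}, e^{−β})` and `q₁ ∝ (e^{2β}, 1, e^{−β+2βε}, e^{−β−2βε})`,
for any `β, ε > 0`. -/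
theorem stmt12 (β ε : ℝ) (hβ : 0 < β) (hε : 0 < ε) :
    let Z₀ : ℝ := exp (2 * β) + 1 + 2 * exp (-β)
    let Z₁ : ℝ := exp (2 * β) + 1 + exp (-β + 2 * β * ε) + exp (-β - 2 * β * ε)
    let q₀ : Fin 4 → ℝ := fun j => ![exp (2 * β), 1, exp (-β), exp (-β)] j / Z₀
    let q₁ : Fin 4 → ℝ := fun j =>
      ![exp (2 * β), 1, exp (-β + 2 * β * ε), exp (-β - 2 * β * ε)] j / Z₁
    ∑ j, q₁ j * Real.log (q₁ j / q₀ j) ≤ 8 * β ^ 2 * ε ^ 2 * exp (-3 * β + 2 * β * ε) := by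
  intro Z₀ Z₁ q₀ q₁
  set t : ℝ := 2 * β * ε with ht
  have hZ₀ : 0 < Z₀ := by
    have h : Z₀ = exp (2 * β) + 1 + 2 * exp (-β) := rfl
    rw [h]; positivity
  have hZ₁ : 0 < Z₁ := by
    have h : Z₁ = exp (2 * β) + 1 + exp (-β + t) + exp (-β - t) := rfl
    rw [h]; positivity
  have hZ₀ne : Z₀ ≠ 0 := ne_of_gt hZ₀
  have hZ₁ne : Z₁ ≠ 0 := ne_of_gt hZ₁
  have hlog : ∀ u v : ℝ, log (exp u / Z₁ / (exp v / Z₀)) = u - v + (log Z₀ - log Z₁) := by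
    intro u v
    rw [log_div (by positivity) (by positivity), log_div (exp_ne_zero u) hZ₁ne,
      log_div (exp_ne_zero v) hZ₀ne, log_exp, log_exp]
    ring
  have hsum : ∑ j, q₁ j * Real.log (q₁ j / q₀ j) =
      (log Z₀ - log Z₁) + t * (exp (-β + t) - exp (-β - t)) / Z₁ := by
    have hq1 : Z₁ = exp (2 * β) + 1 + exp (-β + t) + exp (-β - t) := rfl
    simp only [q₀, q₁, Fin.sum_univ_four, Matrix.cons_val_zero, Matrix.cons_val_one,
      Matrix.head_cons, Matrix.cons_val_two, Matrix.tail_cons, Matrix.cons_val_three]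
    have h0 := hlog (2 * β) (2 * β)
    have h1 : log (1 / Z₁ / (1 / Z₀)) = log Z₀ - log Z₁ := by
      have h := hlog 0 0
      simpa using h
    have h2 := hlog (-β + t) (-β)
    have h3 := hlog (-β - t) (-β)
    rw [h0, h1, h2, h3]
    field_simp
    rw [hq1]
    simp only [ht]
    ring
  rw [hsum]
  have hL : log Z₀ - log Z₁ ≤ (Z₀ - Z₁) / Z₁ := by
    have h := Real.log_le_sub_one_of_pos (show 0 < Z₀ / Z₁ by positivity)
    rw [log_div hZ₀ne hZ₁ne] at h
    calc log Z₀ - log Z₁ ≤ Z₀ / Z₁ - 1 := h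
      _ = (Z₀ - Z₁) / Z₁ := by field_simp
  have ht0 : 0 < t := by positivity
  have hcZ : Z₀ - Z₁ = 2 * exp (-β) - exp (-β + t) - exp (-β - t) := by
    show (exp (2 * β) + 1 + 2 * exp (-β)) - (exp (2 * β) + 1 + exp (-β + t) + exp (-β - t)) = _
    ring
  have hf : t * exp t - t * exp (-t) - exp t - exp (-t) + 2 ≤ 2 * t ^ 2 * exp t := by
    have h1 : (-t) + 1 ≤ exp (-t) := Real.add_one_le_exp (-t)
    have h2 : t + 1 ≤ exp t := Real.add_one_le_exp t
    nlinarith [mul_le_mul_of_nonneg_left h1 (le_of_lt (show (0:ℝ) < t + 1 by linarith)),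
      mul_le_mul_of_nonneg_left h2 (sq_nonneg t), sq_nonneg t, exp_pos t, exp_pos (-t)]
  have hexp1 : exp (-β + t) = exp (-β) * exp t := by rw [← exp_add]
  have hexp2 : exp (-β - t) = exp (-β) * exp (-t) := by rw [← exp_add]; ring_nf
  have hbound : (Z₀ - Z₁) + t * (exp (-β + t) - exp (-β - t)) ≤ exp (-β) * (2 * t ^ 2 * exp t) := by
    rw [hcZ, hexp1, hexp2]
    nlinarith [exp_pos (-β), hf]
  have hstep : (log Z₀ - log Z₁) + t * (exp (-β + t) - exp (-β - t)) / Z₁ ≤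
      exp (-β) * (2 * t ^ 2 * exp t) / Z₁ :=
    calc (log Z₀ - log Z₁) + t * (exp (-β + t) - exp (-β - t)) / Z₁
        ≤ (Z₀ - Z₁) / Z₁ + t * (exp (-β + t) - exp (-β - t)) / Z₁ := by linarith
      _ = ((Z₀ - Z₁) + t * (exp (-β + t) - exp (-β - t))) / Z₁ := by ring
      _ ≤ exp (-β) * (2 * t ^ 2 * exp t) / Z₁ := by
          exact div_le_div_of_nonneg_right hbound hZ₁.le
  refine hstep.trans ?_
  have hZ₁ge : exp (2 * β) ≤ Z₁ := by
    have h : Z₁ = exp (2 * β) + 1 + exp (-β + t) + exp (-β - t) := rfl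
    nlinarith [exp_pos (-β + t), exp_pos (-β - t)]
  have hnum : (0:ℝ) ≤ exp (-β) * (2 * t ^ 2 * exp t) := by positivity
  have hdiv : exp (-β) * (2 * t ^ 2 * exp t) / Z₁ ≤ exp (-β) * (2 * t ^ 2 * exp t) / exp (2 * β) :=
    div_le_div_of_nonneg_left hnum (exp_pos _) hZ₁ge
  refine hdiv.trans (le_of_eq ?_)
  rw [show (-3 * β + t) = (-β + t) - 2 * β by ring, exp_sub, exp_add, ht]
  ring
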